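/- (Lemma 6.2, boundedness is equivalent to existence of a small potential function) There is a constant c > 0 such that the following holds. Let P = (Q,δ,I,O,H) be a population computer of size m ≥ 2 such that for every state q ∈ Q some configuration reachable from some initial configuration puts at least one agent in q. Then P is bounded if and only if there exists a potential function Φ for P, with weights w : Q → ℕ, whose maximum weight max_{q∈Q} w(q) is at most 2^{c·m·log₂ m}. -/

import Mathlib

open scoped ENNReal Classical

namespace PaperPP

/-- Population computers (Angluin-style generalization). -/
structure PopComputer (σ : Type) where
  Q : Finset σ
  δ : Finset (Multiset σ × Multiset σ)
  I : Finset σ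
  O : Finset σ → Option Bool
  H : Multiset σ
  delta_mem : ∀ t ∈ δ, ∀ q ∈ t.1 + t.2, q ∈ Q
  delta_card : ∀ t ∈ δ, Multiset.card t.2 = Multiset.card t.1 ∧ 2 ≤ Multiset.card t.1
  delta_supp : ∀ t ∈ δ, ∃ a b : σ, ∀ q ∈ t.1, q = a ∨ q = b
  delta_fun : ∀ t ∈ δ, ∀ u ∈ δ, t.1 = u.1 → t.2 = u.2
  I_sub : I ⊆ Q
  H_mem : ∀ q ∈ H, q ∈ Q ∧ q ∉ I

variable {σ : Type}

def Step (P : PopComputer σ) (C C' : Multiset σ) : Prop :=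
  ∃ t ∈ P.δ, t.1 ≤ C ∧ C' = C - t.1 + t.2

def Reaches (P : PopComputer σ) : Multiset σ → Multiset σ → Prop :=
  Relation.ReflTransGen (Step P)

def Terminal (P : PopComputer σ) (C : Multiset σ) : Prop :=
  ∀ t ∈ P.δ, ¬ t.1 ≤ C

def IsInput (P : PopComputer σ) (C : Multiset σ) : Prop :=
  ∀ q ∈ C, q ∈ P.I

def Initial (P : PopComputer σ) (CI C0 : Multiset σ) : Prop :=
  ∃ CH : Multiset σ, (∀ q ∈ CH, q ∈ P.H) ∧ P.H ≤ CH ∧ C0 = CI + CH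

def ReachableConfig (P : PopComputer σ) (C : Multiset σ) : Prop :=
  ∃ CI C0, IsInput P CI ∧ Initial P CI C0 ∧ Reaches P C0 C

def IsRun (P : PopComputer σ) (f : ℕ → Multiset σ) : Prop :=
  ∀ i, Step P (f i) (f (i + 1)) ∨ (Terminal P (f i) ∧ f (i + 1) = f i)

def FairRun (P : PopComputer σ) (f : ℕ → Multiset σ) : Prop :=
  IsRun P f ∧ ∀ C : Multiset σ, {i | Reaches P (f i) C}.Infinite → ∃ j, f j = C

def StabilizesTo [DecidableEq σ] (P : PopComputer σ) (f : ℕ → Multiset σ) (b : Bool) : Prop :=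
  ∃ i, ∀ C, Reaches P (f i) C → P.O C.toFinset = some b

def HasOutput [DecidableEq σ] (P : PopComputer σ) (CI : Multiset σ) (b : Bool) : Prop :=
  ∀ C0 f, Initial P CI C0 → FairRun P f → f 0 = C0 → StabilizesTo P f b

def Decides [DecidableEq σ] (P : PopComputer σ) (φ : Multiset σ → Bool) : Prop :=
  ∀ CI, IsInput P CI → HasOutput P CI (φ CI)

def Bounded (P : PopComputer σ) : Prop :=
  ¬ ∃ f : ℕ → Multiset σ,
      (∃ CI, IsInput P CI ∧ Initial P CI (f 0)) ∧ ∀ i, Step P (f i) (f (i + 1))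

def Terminating (P : PopComputer σ) : Prop :=
  ∀ f : ℕ → Multiset σ, (∃ CI, IsInput P CI ∧ Initial P CI (f 0)) → FairRun P f →
    ∃ i, Terminal P (f i)

def Binary (P : PopComputer σ) : Prop := ∀ t ∈ P.δ, Multiset.card t.1 = 2

def ConsensusOutput [DecidableEq σ] (P : PopComputer σ) : Prop :=
  ∃ Q1 : Finset σ, Q1 ⊆ P.Q ∧ ∀ S : Finset σ, S ⊆ P.Q → S.Nonempty →
    P.O S = if S ⊆ Q1 then some true else if S ⊆ P.Q \ Q1 then some false else none

def MarkedConsensusOutput [DecidableEq σ] (P : PopComputer σ) : Prop :=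
  ∃ Q0 Q1 : Finset σ, Q0 ⊆ P.Q ∧ Q1 ⊆ P.Q ∧ Disjoint Q0 Q1 ∧
    ∀ S : Finset σ, S ⊆ P.Q → S.Nonempty →
      P.O S = if (S ∩ Q1).Nonempty ∧ S ∩ Q0 = ∅ then some true
        else if (S ∩ Q0).Nonempty ∧ S ∩ Q1 = ∅ then some false else none

def IsProtocol [DecidableEq σ] (P : PopComputer σ) : Prop :=
  Binary P ∧ P.H = 0 ∧ ConsensusOutput P

/-! Boolean circuits, used to measure the size of output functions. -/

inductive Circ (α : Type) : Type where
  | inp : α → Circ α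
  | tru : Circ α
  | fal : Circ α
  | neg : Circ α → Circ α
  | conj : Circ α → Circ α → Circ α
  | disj : Circ α → Circ α → Circ α

def Circ.eval {α : Type} (v : α → Bool) : Circ α → Bool
  | .inp a => v a
  | .tru => true
  | .fal => false
  | .neg c => !(Circ.eval v c)
  | .conj c d => Circ.eval v c && Circ.eval v d
  | .disj c d => Circ.eval v c || Circ.eval v d

def Circ.gates {α : Type} : Circ α → ℕ
  | .inp _ => 1
  | .tru => 1
  | .fal => 1
  | .neg c => Circ.gates c + 1
  | .conj c d => Circ.gates c + Circ.gates d + 1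
  | .disj c d => Circ.gates c + Circ.gates d + 1

noncomputable def outSize [DecidableEq σ] (P : PopComputer σ) : ℕ :=
  sInf {n | ∃ cd cv : Circ σ, Circ.gates cd + Circ.gates cv = n ∧
    ∀ S : Finset σ, S ⊆ P.Q →
      P.O S = if Circ.eval (fun q => decide (q ∈ S)) cd then
          some (Circ.eval (fun q => decide (q ∈ S)) cv) else none}

noncomputable def csize [DecidableEq σ] (P : PopComputer σ) : ℕ :=
  P.Q.card + Multiset.card P.H + outSize P + ∑ t ∈ P.δ, Multiset.card t.1

noncomputable def asize [DecidableEq σ] (P : PopComputer σ) : ℕ :=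
  P.Q.card + Multiset.card P.H + outSize P

/-! Probabilistic execution model. -/

def pairCount [DecidableEq σ] (C r : Multiset σ) : ℕ :=
  (Multiset.powersetCard 2 C).count r

noncomputable def stepKer [DecidableEq σ] (P : PopComputer σ) (C C' : Multiset σ) : ℝ≥0∞ :=
  (∑ t ∈ P.δ, if t.1 ≤ C ∧ C' = C - t.1 + t.2 then (pairCount C t.1 : ℝ≥0∞) else 0) /
      (Nat.choose (Multiset.card C) 2 : ℝ≥0∞) +
    (if C' = C then
      1 - (∑ t ∈ P.δ, (pairCount C t.1 : ℝ≥0∞)) / (Nat.choose (Multiset.card C) 2 : ℝ≥0∞)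
    else 0)

noncomputable def hitKer [DecidableEq σ] (P : PopComputer σ) (A : Set (Multiset σ))
    (C C' : Multiset σ) : ℝ≥0∞ :=
  if C ∈ A then (if C' = C then 1 else 0) else stepKer P C C'

noncomputable def hitIter [DecidableEq σ] (P : PopComputer σ) (A : Set (Multiset σ)) :
    ℕ → Multiset σ → Multiset σ → ℝ≥0∞
  | 0, C, C' => if C' = C then 1 else 0
  | n + 1, C, C' => ∑' D : Multiset σ, hitIter P A n C D * hitKer P A D C'

/-- Expected hitting time of the set `A`, computed as `∑ₜ Pr[Xₜ ∉ A]` for the chain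
absorbed at `A`. -/
noncomputable def expHit [DecidableEq σ] (P : PopComputer σ) (A : Set (Multiset σ))
    (C0 : Multiset σ) : ℝ≥0∞ :=
  ∑' n : ℕ, ∑' C : Multiset σ, if C ∈ A then 0 else hitIter P A n C0 C

def StableConfig [DecidableEq σ] (P : PopComputer σ) (C : Multiset σ) : Prop :=
  ∃ b : Bool, ∀ C', Reaches P C C' → P.O C'.toFinset = some b

noncomputable def expTermination [DecidableEq σ] (P : PopComputer σ) (C0 : Multiset σ) : ℝ≥0∞ :=
  expHit P {C | Terminal P C} C0

noncomputable def expStabilization [DecidableEq σ] (P : PopComputer σ) (C0 : Multiset σ) : ℝ≥0∞ :=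
  expHit P {C | StableConfig P C} C0

/-! Quantifier-free Presburger arithmetic. -/

inductive QFPA (v : ℕ) : Type where
  | threshold (a : Fin v → ℤ) (c : ℤ) : QFPA v
  | remainder (a : Fin v → ℤ) (θ : ℕ) (c : Fin θ) : QFPA v
  | not (φ : QFPA v) : QFPA v
  | and (φ ψ : QFPA v) : QFPA v
  | or (φ ψ : QFPA v) : QFPA v

def QFPA.eval {v : ℕ} : QFPA v → (Fin v → ℕ) → Bool
  | .threshold a c, x => decide (c ≤ ∑ i, a i * (x i : ℤ))
  | .remainder a θ c, x => decide ((∑ i, a i * (x i : ℤ)) % (θ : ℤ) = ((c : ℕ) : ℤ))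
  | .not φ, x => !(QFPA.eval φ x)
  | .and φ ψ, x => QFPA.eval φ x && QFPA.eval ψ x
  | .or φ ψ, x => QFPA.eval φ x || QFPA.eval ψ x

def zsize (z : ℤ) : ℕ := Nat.size z.natAbs + 1

def QFPA.fsize {v : ℕ} : QFPA v → ℕ
  | .threshold a c => (∑ i, zsize (a i)) + zsize c + 1
  | .remainder a θ c => (∑ i, zsize (a i)) + Nat.size θ + Nat.size (c : ℕ) + 1
  | .not φ => QFPA.fsize φ + 1
  | .and φ ψ => QFPA.fsize φ + QFPA.fsize ψ + 1
  | .or φ ψ => QFPA.fsize φ + QFPA.fsize ψ + 1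

def QFPA.double {v : ℕ} : QFPA v → QFPA (v + v)
  | .threshold a c =>
      .threshold (fun i => Fin.addCases (fun j => a j) (fun j => 2 * a j) i) c
  | .remainder a θ c =>
      .remainder (fun i => Fin.addCases (fun j => a j) (fun j => 2 * a j) i) θ c
  | .not φ => .not (QFPA.double φ)
  | .and φ ψ => .and (QFPA.double φ) (QFPA.double ψ)
  | .or φ ψ => .or (QFPA.double φ) (QFPA.double ψ)

def inputConfig {v : ℕ} (lab : Fin v → σ) (x : Fin v → ℕ) : Multiset σ :=
  ∑ i : Fin v, Multiset.replicate (x i) (lab i)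

def DecidesQFPA [DecidableEq σ] {v : ℕ} (P : PopComputer σ) (lab : Fin v → σ)
    (φ : QFPA v) : Prop :=
  Function.Injective lab ∧ P.I = Finset.univ.image lab ∧
    ∀ x : Fin v → ℕ, HasOutput P (inputConfig lab x) (QFPA.eval φ x)

def DecidesQFPAFrom [DecidableEq σ] {v : ℕ} (P : PopComputer σ) (lab : Fin v → σ)
    (φ : QFPA v) (k : ℕ) : Prop :=
  Function.Injective lab ∧ P.I = Finset.univ.image lab ∧
    ∀ x : Fin v → ℕ, k ≤ ∑ i, x i → HasOutput P (inputConfig lab x) (QFPA.eval φ x)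

/-! Potential functions and rapidness. -/

def mweight (w : σ → ℕ) (C : Multiset σ) : ℕ := (C.map w).sum

def IsPotential (P : PopComputer σ) (w : σ → ℕ) : Prop :=
  ∀ t ∈ P.δ, mweight w t.2 + (Multiset.card t.1 - 1) ≤ mweight w t.1

def tmin [DecidableEq σ] (C r : Multiset σ) : ℕ :=
  if h : r.toFinset.Nonempty then r.toFinset.inf' h (fun q => C.count q) else 0

def speedOn [DecidableEq σ] (T : Finset (Multiset σ × Multiset σ)) (C : Multiset σ) : ℕ :=
  ∑ t ∈ T, (tmin C t.1) ^ 2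

def speed [DecidableEq σ] (P : PopComputer σ) (C : Multiset σ) : ℕ := speedOn P.δ C

def RapidAt [DecidableEq σ] (P : PopComputer σ) (w : σ → ℕ) (α : ℝ) (C : Multiset σ) : Prop :=
  ∀ Cterm, Reaches P C Cterm → Terminal P Cterm →
    ((mweight w C : ℝ) - (mweight w Cterm : ℝ)) ^ 2 / α ≤ (speed P C : ℝ)

def countIn [DecidableEq σ] (P : PopComputer σ) (C : Multiset σ) : ℕ :=
  ∑ q ∈ P.I, C.count q

def WellInitialised [DecidableEq σ] (P : PopComputer σ) (C : Multiset σ) : Prop :=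
  ReachableConfig P C ∧ 3 * (countIn P C + Multiset.card P.H) ≤ 2 * Multiset.card C

def outdeg [DecidableEq σ] (P : PopComputer σ) (q : σ) : ℕ :=
  (P.δ.filter (fun t => q ∈ t.1)).card

def IsRapid [DecidableEq σ] (P : PopComputer σ) (α : ℝ) : Prop :=
  (∃ w : σ → ℕ, IsPotential P w ∧ ∀ C, WellInitialised P C → RapidAt P w α C) ∧
  (∃ q0 : σ, ∀ q ∈ P.Q, q ≠ q0 → outdeg P q ≤ 2) ∧
  (∀ C : Multiset σ, IsInput P C → Terminal P C) ∧
  (∀ t ∈ P.δ, ∀ q ∈ P.I, t.1.count q ≤ 1 ∧ t.2.count q = 0)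

def deltaGt [DecidableEq σ] (P : PopComputer σ) (w : σ → ℕ) :
    Finset (Multiset σ × Multiset σ) :=
  P.δ.filter (fun t => mweight w t.2 < mweight w t.1)

def deltaLt [DecidableEq σ] (P : PopComputer σ) (w : σ → ℕ) :
    Finset (Multiset σ × Multiset σ) :=
  P.δ.filter (fun t => mweight w t.1 < mweight w t.2)

def RapidAtGt [DecidableEq σ] (P : PopComputer σ) (w : σ → ℕ) (α : ℝ) (C : Multiset σ) : Prop :=
  ∀ Cterm, Reaches P C Cterm → Terminal P Cterm →
    ((mweight w C : ℝ) - (mweight w Cterm : ℝ)) ^ 2 / α ≤ (speedOn (deltaGt P w) C : ℝ)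

def GroupRapidAt [DecidableEq σ] (P : PopComputer σ) {e : ℕ} (w : Fin e → σ → ℕ) (α : ℝ)
    (C : Multiset σ) : Prop :=
  Terminal P C ∨ ∃ i : Fin e,
    RapidAtGt P (w i) α C ∧
    (∃ t ∈ deltaGt P (w i), t.1 ≤ C) ∧
    (∀ C', Reaches P C C' → ∀ t ∈ deltaLt P (w i), ¬ t.1 ≤ C')

/-- Refinement between computers over the same state space. -/
def Refines [DecidableEq σ] (P' P : PopComputer σ) (π : Multiset σ → Multiset σ) : Prop :=
  (∀ C D, ReachableConfig P' C → ReachableConfig P' D → Step P' C D →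
    Reaches P (π C) (π D)) ∧
  (P.I = P'.I ∧ ∀ CI C, IsInput P' CI → Initial P' CI C →
    ((∃ DI, IsInput P DI ∧ Initial P DI (π C)) ∧
      ∀ q ∈ P.I, (π C).count q = C.count q)) ∧
  (∀ C, ReachableConfig P' C → Terminal P' C →
    Terminal P (π C) ∧ P.O (π C).toFinset = P'.O C.toFinset)


section Comb

variable {σ : Type}

lemma step_mono' (P : PopComputer σ) {C D : Multiset σ} (X : Multiset σ) (h : Step P C D) :
    Step P (C + X) (D + X) := by
  classical
  obtain ⟨t, ht, hle, rfl⟩ := h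
  refine ⟨t, ht, le_trans hle (Multiset.le_add_right _ _), ?_⟩
  ext a
  have hr := Multiset.count_le_of_le a hle
  simp only [Multiset.count_add, Multiset.count_sub]
  omega

lemma reaches_mono' (P : PopComputer σ) {C D : Multiset σ} (X : Multiset σ)
    (h : Reaches P C D) : Reaches P (C + X) (D + X) := by
  induction h with
  | refl => exact Relation.ReflTransGen.refl
  | tail h1 h2 ih => exact ih.tail (step_mono' P X h2)

lemma reachable_add' (P : PopComputer σ) {C D : Multiset σ} (hC : ReachableConfig P C)
    (hD : ReachableConfig P D) : ReachableConfig P (C + D) := by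
  obtain ⟨CI, C0, hCI, ⟨CH, hCH1, hCH2, rfl⟩, hCR⟩ := hC
  obtain ⟨DI, D0, hDI, ⟨DH, hDH1, hDH2, rfl⟩, hDR⟩ := hD
  refine ⟨CI + DI, (CI + CH) + (DI + DH), ?_, ⟨CH + DH, ?_, ?_, ?_⟩, ?_⟩
  · intro q hq
    rcases Multiset.mem_add.mp hq with h | h
    · exact hCI q h
    · exact hDI q h
  · intro q hq
    rcases Multiset.mem_add.mp hq with h | h
    · exact hCH1 q h
    · exact hDH1 q h
  · exact le_trans hCH2 (Multiset.le_add_right _ _)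
  · rw [add_add_add_comm]
  · have h1 : Reaches P ((CI + CH) + (DI + DH)) (C + (DI + DH)) :=
      reaches_mono' P _ hCR
    have h2 : Reaches P ((DI + DH) + C) (D + C) := reaches_mono' P _ hDR
    rw [add_comm] at h2
    refine h1.trans ?_
    rw [add_comm C D]
    exact h2

lemma reachable_H' (P : PopComputer σ) : ReachableConfig P P.H :=
  ⟨0, P.H, fun q h => absurd h (Multiset.notMem_zero q),
    ⟨P.H, fun _ h => h, le_rfl, (zero_add _).symm⟩, Relation.ReflTransGen.refl⟩

lemma cover' (P : PopComputer σ) (hcov : ∀ q ∈ P.Q, ∃ C, ReachableConfig P C ∧ q ∈ C) :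
    ∀ R : Multiset σ, (∀ q ∈ R, q ∈ P.Q) → ∃ C, ReachableConfig P C ∧ R ≤ C := by
  intro R
  induction R using Multiset.induction_on with
  | empty => exact fun _ => ⟨P.H, reachable_H' P, Multiset.zero_le _⟩
  | cons q R ih =>
    intro hmem
    obtain ⟨C1, hC1, hq1⟩ := hcov q (hmem q (Multiset.mem_cons_self q R))
    obtain ⟨C2, hC2, hR2⟩ := ih (fun x hx => hmem x (Multiset.mem_cons_of_mem hx))
    refine ⟨C1 + C2, reachable_add' P hC1 hC2, ?_⟩
    have : (q ::ₘ R) = {q} + R := by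
      rw [Multiset.singleton_add]
    rw [this]
    exact add_le_add (Multiset.singleton_le.mpr hq1) hR2

/-- Explicit finite paths of a given length. -/
def PathN (P : PopComputer σ) (L : ℕ) (C D : Multiset σ) : Prop :=
  ∃ g : ℕ → Multiset σ, g 0 = C ∧ g L = D ∧ ∀ i < L, Step P (g i) (g (i + 1))

lemma pathN_refl (P : PopComputer σ) (C : Multiset σ) : PathN P 0 C C :=
  ⟨fun _ => C, rfl, rfl, fun i hi => absurd hi (by omega)⟩

lemma pathN_single (P : PopComputer σ) {C D : Multiset σ} (h : Step P C D) : PathN P 1 C D := by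
  refine ⟨fun n => if n = 0 then C else D, by simp, by simp, ?_⟩
  intro i hi
  have : i = 0 := by omega
  subst this
  simpa using h

lemma pathN_trans (P : PopComputer σ) {L1 L2 : ℕ} {C D E : Multiset σ}
    (h1 : PathN P L1 C D) (h2 : PathN P L2 D E) : PathN P (L1 + L2) C E := by
  obtain ⟨g1, hg10, hg1L, hg1s⟩ := h1
  obtain ⟨g2, hg20, hg2L, hg2s⟩ := h2
  refine ⟨fun n => if n ≤ L1 then g1 n else g2 (n - L1), by simp [hg10], ?_, ?_⟩
  · by_cases hL2 : L2 = 0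
    · subst hL2
      simp only [Nat.add_zero, le_refl, if_pos]
      rw [hg1L, ← hg20, hg2L]
    · have : ¬ (L1 + L2 ≤ L1) := by omega
      simp only [this, if_false]
      rw [Nat.add_sub_cancel_left, hg2L]
  · intro i hi
    rcases lt_trichotomy i L1 with h | h | h
    · have h1le : i ≤ L1 := by omega
      by_cases h2le : i + 1 ≤ L1
      · simpa [h1le, h2le] using hg1s i (by omega)
      · have hieq : i + 1 = L1 := by omega
        have : g2 (i + 1 - L1) = g1 (i + 1) := by
          rw [hieq, Nat.sub_self, hg20, ← hg1L]
        simp only [h1le, if_pos, h2le, if_neg, not_false_iff]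
        rw [this]
        exact hg1s i (by omega)
    · subst h
      have h2le : ¬ (i + 1 ≤ i) := by omega
      simp only [le_refl, if_pos, h2le, if_neg, not_false_iff]
      have hstep := hg2s 0 (by omega)
      rw [hg20, ← hg1L] at hstep
      have he : i + 1 - i = 1 := by omega
      rw [he]
      exact hstep
    · have h1le : ¬ (i ≤ L1) := by omega
      have h2le : ¬ (i + 1 ≤ L1) := by omega
      simp only [h1le, h2le, if_neg, not_false_iff]
      have : i + 1 - L1 = (i - L1) + 1 := by omega
      rw [this]
      exact hg2s (i - L1) (by omega)

lemma pathN_mono (P : PopComputer σ) {L : ℕ} {C D : Multiset σ} (X : Multiset σ)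
    (h : PathN P L C D) : PathN P L (C + X) (D + X) := by
  obtain ⟨g, hg0, hgL, hgs⟩ := h
  exact ⟨fun n => g n + X, by show g 0 + X = C + X; rw [hg0],
    by show g L + X = D + X; rw [hgL], fun i hi => step_mono' P X (hgs i hi)⟩

lemma reaches_pathN (P : PopComputer σ) {C D : Multiset σ} (h : Reaches P C D) :
    ∃ L, PathN P L C D := by
  induction h with
  | refl => exact ⟨0, pathN_refl P C⟩
  | tail h1 h2 ih =>
    obtain ⟨L, hL⟩ := ih
    exact ⟨L + 1, pathN_trans P hL (pathN_single P h2)⟩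

lemma fire_multiset (P : PopComputer σ) :
    ∀ τ : Multiset (Multiset σ × Multiset σ), (∀ t ∈ τ, t ∈ P.δ) →
      ∀ C : Multiset σ, (τ.map Prod.fst).sum ≤ C →
        PathN P (Multiset.card τ) C (C - (τ.map Prod.fst).sum + (τ.map Prod.snd).sum) := by
  classical
  intro τ
  induction τ using Multiset.induction_on with
  | empty =>
    intro _ C _
    simpa using pathN_refl P C
  | cons t τ ih =>
    intro hmem C hle
    rw [Multiset.map_cons, Multiset.map_cons, Multiset.sum_cons, Multiset.sum_cons] at *
    have ht1 : t.1 ≤ C := le_trans (Multiset.le_add_right _ _) hle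
    have hstep : Step P C (C - t.1 + t.2) := ⟨t, hmem t (Multiset.mem_cons_self t τ), ht1, rfl⟩
    have hle2 : (τ.map Prod.fst).sum ≤ C - t.1 + t.2 := by
      rw [Multiset.le_iff_count] at hle ⊢
      intro a
      have h := hle a
      simp only [Multiset.count_add, Multiset.count_sub] at h ⊢
      omega
    have hpath := ih (fun u hu => hmem u (Multiset.mem_cons_of_mem hu)) (C - t.1 + t.2) hle2
    have hfinal : (C - t.1 + t.2) - (τ.map Prod.fst).sum + (τ.map Prod.snd).sum
        = C - (t.1 + (τ.map Prod.fst).sum) + (t.2 + (τ.map Prod.snd).sum) := by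
      ext a
      have h := Multiset.count_le_of_le a hle
      have h1 := Multiset.count_le_of_le a ht1
      simp only [Multiset.count_add, Multiset.count_sub] at *
      omega
    rw [hfinal] at hpath
    have := pathN_trans P (pathN_single P hstep) hpath
    rw [Multiset.card_cons]
    simpa [Nat.add_comm] using this

lemma unbounded_of_loop (P : PopComputer σ) {CI C0 C E : Multiset σ} {L1 L0 : ℕ}
    (hCI : IsInput P CI) (hC0 : Initial P CI C0) (hpre : PathN P L1 C0 C)
    (hloop : PathN P L0 C (C + E)) (hL0 : 1 ≤ L0) : ¬ Bounded P := by
  intro hb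
  apply hb
  obtain ⟨g1, hg10, hg1L, hg1s⟩ := hpre
  obtain ⟨g0, hg00, hg0L, hg0s⟩ := hloop
  refine ⟨fun n => if n < L1 then g1 n else g0 ((n - L1) % L0) + ((n - L1) / L0) • E,
    ⟨CI, hCI, ?_⟩, ?_⟩
  · by_cases h : 0 < L1
    · simpa [h] using (hg10 ▸ hC0)
    · have hL1 : L1 = 0 := by omega
      subst hL1
      simp only [Nat.lt_irrefl, if_neg, not_false_iff, Nat.sub_zero, Nat.zero_mod,
        Nat.zero_div, zero_smul, add_zero]
      rw [hg00, ← hg1L, hg10]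
      exact hC0
  · intro i
    rcases lt_trichotomy (i + 1) L1 with h | h | h
    · have hi : i < L1 := by omega
      simpa [hi, h] using hg1s i (by omega)
    · have hi : i < L1 := by omega
      have hnot : ¬ (i + 1 < L1) := by omega
      simp only [hi, if_pos, hnot, if_neg, not_false_iff]
      have he : i + 1 - L1 = 0 := by omega
      rw [he]
      simp only [Nat.zero_mod, Nat.zero_div, zero_smul, add_zero]
      rw [hg00]
      have hstep := hg1s i (by omega)
      rw [show i + 1 = L1 from h, hg1L] at hstep
      exact hstep
    · have hi : ¬ (i < L1) := by omega
      have hnot : ¬ (i + 1 < L1) := by omega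
      simp only [hi, hnot, if_neg, not_false_iff]
      set dcur := i - L1 with hd
      have hd1 : i + 1 - L1 = dcur + 1 := by omega
      rw [hd1]
      have hL0pos : 0 < L0 := by omega
      have hj : dcur % L0 < L0 := Nat.mod_lt _ hL0pos
      set k := dcur / L0 with hkdef
      set j := dcur % L0 with hjdef
      have hdc : L0 * k + j = dcur := Nat.div_add_mod dcur L0
      by_cases hjs : j + 1 < L0
      · have e1 : dcur + 1 = (j + 1) + L0 * k := by rw [← hdc]; ring
        have hmod : (dcur + 1) % L0 = j + 1 := by
          rw [e1, Nat.add_mul_mod_self_left]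
          exact Nat.mod_eq_of_lt hjs
        have hdiv : (dcur + 1) / L0 = k := by
          rw [e1, Nat.add_mul_div_left _ _ hL0pos, Nat.div_eq_of_lt hjs, Nat.zero_add]
        rw [hmod, hdiv]
        exact step_mono' P _ (hg0s j (by omega))
      · have hjeq : j + 1 = L0 := by omega
        have e2 : dcur + 1 = L0 * (k + 1) := by rw [← hdc, ← hjeq]; ring
        have hmod : (dcur + 1) % L0 = 0 := by
          rw [e2, Nat.mul_mod_right]
        have hdiv : (dcur + 1) / L0 = k + 1 := by
          rw [e2, Nat.mul_div_cancel_left _ hL0pos]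
        rw [hmod, hdiv]
        have hstep := step_mono' P (k • E) (hg0s j (by omega))
        have heq : g0 (j + 1) + k • E = g0 0 + (k + 1) • E := by
          rw [hjeq, hg0L, hg00, succ_nsmul]
          abel
        rw [heq] at hstep
        exact hstep


lemma bounded_no_y (P : PopComputer σ) (hb : Bounded P)
    (hcov : ∀ q ∈ P.Q, ∃ C, ReachableConfig P C ∧ q ∈ C) :
    ¬ ∃ y : {t // t ∈ P.δ} → ℕ, y ≠ 0 ∧
      (∑ t : {t // t ∈ P.δ}, y t • (t : Multiset σ × Multiset σ).1) ≤
        (∑ t : {t // t ∈ P.δ}, y t • (t : Multiset σ × Multiset σ).2) := by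
  classical
  rintro ⟨y, hyne, hRS⟩
  set R : Multiset σ := ∑ t : {t // t ∈ P.δ}, y t • (t : Multiset σ × Multiset σ).1 with hR
  set S : Multiset σ := ∑ t : {t // t ∈ P.δ}, y t • (t : Multiset σ × Multiset σ).2 with hS
  set τ : Multiset (Multiset σ × Multiset σ) :=
    ∑ t : {t // t ∈ P.δ}, y t • ({(t : Multiset σ × Multiset σ)} : Multiset _) with hτ
  have hmemτ : ∀ u ∈ τ, u ∈ P.δ := by
    intro u hu
    rw [hτ, Multiset.mem_sum] at hu
    obtain ⟨t, _, hmem⟩ := hu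
    rcases Multiset.mem_nsmul.mp hmem with ⟨_, hmem2⟩
    rw [Multiset.mem_singleton] at hmem2
    rw [hmem2]
    exact t.2
  have hmapfst : (τ.map Prod.fst).sum = R := by
    rw [hτ, hR]
    rw [show (Multiset.map Prod.fst (∑ t : {t // t ∈ P.δ}, y t • ({(t : Multiset σ × Multiset σ)} : Multiset _)))
      = Multiset.mapAddMonoidHom (Prod.fst) (∑ t : {t // t ∈ P.δ}, y t • ({(t : Multiset σ × Multiset σ)} : Multiset _)) from rfl]
    rw [map_sum]
    rw [show (Multiset.sum (∑ t : {t // t ∈ P.δ},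
        Multiset.mapAddMonoidHom (Prod.fst) (y t • ({(t : Multiset σ × Multiset σ)} : Multiset _))))
      = Multiset.sumAddMonoidHom (∑ t : {t // t ∈ P.δ},
        Multiset.mapAddMonoidHom (Prod.fst) (y t • ({(t : Multiset σ × Multiset σ)} : Multiset _))) from rfl]
    rw [map_sum]
    refine Finset.sum_congr rfl fun t _ => ?_
    rw [map_nsmul, map_nsmul]
    congr 1
    show Multiset.sum (Multiset.map Prod.fst {(t : Multiset σ × Multiset σ)})
      = (t : Multiset σ × Multiset σ).1
    rw [Multiset.map_singleton, Multiset.sum_singleton]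
  have hmapsnd : (τ.map Prod.snd).sum = S := by
    rw [hτ, hS]
    rw [show (Multiset.map Prod.snd (∑ t : {t // t ∈ P.δ}, y t • ({(t : Multiset σ × Multiset σ)} : Multiset _)))
      = Multiset.mapAddMonoidHom (Prod.snd) (∑ t : {t // t ∈ P.δ}, y t • ({(t : Multiset σ × Multiset σ)} : Multiset _)) from rfl]
    rw [map_sum]
    rw [show (Multiset.sum (∑ t : {t // t ∈ P.δ},
        Multiset.mapAddMonoidHom (Prod.snd) (y t • ({(t : Multiset σ × Multiset σ)} : Multiset _))))
      = Multiset.sumAddMonoidHom (∑ t : {t // t ∈ P.δ},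
        Multiset.mapAddMonoidHom (Prod.snd) (y t • ({(t : Multiset σ × Multiset σ)} : Multiset _)))  from rfl]
    rw [map_sum]
    refine Finset.sum_congr rfl fun t _ => ?_
    rw [map_nsmul, map_nsmul]
    congr 1
    show Multiset.sum (Multiset.map Prod.snd {(t : Multiset σ × Multiset σ)})
      = (t : Multiset σ × Multiset σ).2
    rw [Multiset.map_singleton, Multiset.sum_singleton]
  have hcard : 1 ≤ Multiset.card τ := by
    obtain ⟨t0, ht0⟩ := Function.ne_iff.mp hyne
    have hy0 : y t0 ≠ 0 := by simpa using ht0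
    have hmem : (t0 : Multiset σ × Multiset σ) ∈ τ := by
      rw [hτ, Multiset.mem_sum]
      exact ⟨t0, Finset.mem_univ t0, Multiset.mem_nsmul.mpr ⟨hy0, Multiset.mem_singleton_self _⟩⟩
    have := Multiset.card_pos_iff_exists_mem.mpr ⟨_, hmem⟩
    omega
  have hRQ : ∀ q ∈ R, q ∈ P.Q := by
    intro q hq
    rw [hR, Multiset.mem_sum] at hq
    obtain ⟨t, _, hmem⟩ := hq
    rcases Multiset.mem_nsmul.mp hmem with ⟨_, hmem2⟩
    exact P.delta_mem t.1 t.2 q (Multiset.mem_add.mpr (Or.inl hmem2))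
  obtain ⟨C, hCreach, hRC⟩ := cover' P hcov R hRQ
  obtain ⟨CI, C0, hCI, hInit, hreach⟩ := hCreach
  obtain ⟨L1, hpre⟩ := reaches_pathN P hreach
  have hfire := fire_multiset P τ hmemτ C (by rw [hmapfst]; exact hRC)
  rw [hmapfst, hmapsnd] at hfire
  have hloopeq : C - R + S = C + (S - R) := by
    ext a
    have h1 := Multiset.count_le_of_le a hRC
    have h2 := Multiset.count_le_of_le a hRS
    simp only [Multiset.count_add, Multiset.count_sub]
    omega
  rw [hloopeq] at hfire
  exact unbounded_of_loop P hCI hInit hpre hfire hcard hb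


lemma mweight_add (w : σ → ℕ) (A B : Multiset σ) :
    mweight w (A + B) = mweight w A + mweight w B := by
  simp [mweight]

lemma bounded_of_potential (P : PopComputer σ) (w : σ → ℕ) (hpot : IsPotential P w) :
    Bounded P := by
  rintro ⟨f, _, hstep⟩
  have hdec : ∀ i, mweight w (f (i + 1)) + 1 ≤ mweight w (f i) := by
    intro i
    obtain ⟨t, ht, hle, heq⟩ := hstep i
    have hp := hpot t ht
    have hc := (P.delta_card t ht).2
    have hsplit : f i = (f i - t.1) + t.1 := by
      ext a
      have := Multiset.count_le_of_le a hle
      simp only [Multiset.count_add, Multiset.count_sub]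
      omega
    have h1 : mweight w (f i) = mweight w (f i - t.1) + mweight w t.1 := by
      conv_lhs => rw [hsplit]
      exact mweight_add w _ _
    have h2 : mweight w (f (i + 1)) = mweight w (f i - t.1) + mweight w t.2 := by
      rw [heq]
      exact mweight_add w _ _
    omega
  have hmono : ∀ n, mweight w (f n) + n ≤ mweight w (f 0) := by
    intro n
    induction n with
    | zero => omega
    | succ n ih =>
      have := hdec n
      omega
  have := hmono (mweight w (f 0) + 1)
  omega

lemma mweight_eq_sum_count [DecidableEq σ] (w : σ → ℕ) (C : Multiset σ) (F : Finset σ)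
    (h : ∀ q ∈ C, q ∈ F) : mweight w C = ∑ q ∈ F, C.count q * w q := by
  induction C using Multiset.induction_on with
  | empty => simp [mweight]
  | cons a C ih =>
    have ha : a ∈ F := h a (Multiset.mem_cons_self a C)
    have hC : ∀ q ∈ C, q ∈ F := fun q hq => h q (Multiset.mem_cons_of_mem hq)
    have h1 : mweight w (a ::ₘ C) = w a + mweight w C := by simp [mweight]
    rw [h1, ih hC]
    have h2 : ∀ q ∈ F, (a ::ₘ C).count q * w q
        = (if q = a then w a else 0) + C.count q * w q := by
      intro q _
      by_cases hqa : q = a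
      · subst hqa
        rw [Multiset.count_cons_self, if_pos rfl]
        ring
      · rw [Multiset.count_cons_of_ne hqa, if_neg hqa, Nat.zero_add]
    rw [Finset.sum_congr rfl h2, Finset.sum_add_distrib, Finset.sum_ite_eq' F a (fun _ => w a),
      if_pos ha]

end Comb


theorem ville : ∀ (n : ℕ) {ι : Type} [Fintype ι] (A : ι → Fin n → ℚ) (act : ι → Prop)
    (c : ι → ℚ), (∀ i, act i → 0 < c i) →
    (¬ ∃ y : ι → ℚ, (∀ i, 0 ≤ y i) ∧ y ≠ 0 ∧ (∀ i, ¬ act i → y i = 0) ∧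
        ∀ q, (∑ i, y i * A i q) ≤ 0) →
    ∃ w : Fin n → ℚ, (∀ q, 0 ≤ w q) ∧ ∀ i, act i → c i ≤ ∑ q, A i q * w q := by
  intro n
  induction n with
  | zero =>
    intro ι _ A act c hc hy
    refine ⟨0, fun q => le_rfl, fun i hact => ?_⟩
    exfalso; apply hy
    refine ⟨fun j => if j = i then 1 else 0, ?_, ?_, ?_, ?_⟩
    · intro j; by_cases hji : j = i <;> simp [hji]
    · intro h0
      have := congrFun h0 i
      simp at this
    · intro j hj
      by_cases hji : j = i
      · subst hji; exact absurd hact hj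
      · simp [hji]
    · intro q; exact q.elim0
  | succ n IH =>
    intro ι _ A act c hc hy
    set L := Fin.last n with hL
    set act' : (ι ⊕ ι × ι) → Prop := fun p =>
      match p with
      | .inl i => act i ∧ A i L ≤ 0
      | .inr (i, j) => act i ∧ act j ∧ 0 < A i L ∧ A j L < 0 with hact'
    set A' : (ι ⊕ ι × ι) → Fin n → ℚ := fun p q =>
      match p with
      | .inl i => A i q.castSucc
      | .inr (i, j) => (-(A j L)) * A i q.castSucc + A i L * A j q.castSucc with hA'
    set c' : (ι ⊕ ι × ι) → ℚ := fun p =>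
      match p with
      | .inl i => c i
      | .inr (i, j) => (-(A j L)) * c i + A i L * c j with hc'def
    have hc' : ∀ p, act' p → 0 < c' p := by
      rintro (i | ⟨i, j⟩) hp
      · exact hc i hp.1
      · obtain ⟨h1, h2, h3, h4⟩ := hp
        have hci := hc i h1; have hcj := hc j h2
        show 0 < (-(A j L)) * c i + A i L * c j
        have : 0 < (-(A j L)) * c i := mul_pos (by linarith) hci
        have : 0 < A i L * c j := mul_pos h3 hcj
        linarith
    have hy' : ¬ ∃ y' : (ι ⊕ ι × ι) → ℚ, (∀ p, 0 ≤ y' p) ∧ y' ≠ 0 ∧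
        (∀ p, ¬ act' p → y' p = 0) ∧ ∀ q, (∑ p, y' p * A' p q) ≤ 0 := by
      rintro ⟨y', hy0, hyne, hyvan, hysum⟩
      apply hy
      set y : ι → ℚ := fun i => y' (.inl i) + (∑ j, y' (.inr (i, j)) * (-(A j L)))
        + (∑ j, y' (.inr (j, i)) * A j L) with hydef
      have ht2 : ∀ i j, 0 ≤ y' (.inr (i, j)) * (-(A j L)) := by
        intro i j
        by_cases hp : act' (.inr (i, j))
        · exact mul_nonneg (hy0 _) (by have := hp.2.2.2; linarith)
        · rw [hyvan (.inr (i, j)) hp, zero_mul]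
      have ht3 : ∀ i j, 0 ≤ y' (.inr (j, i)) * A j L := by
        intro i j
        by_cases hp : act' (.inr (j, i))
        · exact mul_nonneg (hy0 _) (le_of_lt hp.2.2.1)
        · rw [hyvan (.inr (j, i)) hp, zero_mul]
      have hy0' : ∀ i, 0 ≤ y i := by
        intro i
        have s2 : 0 ≤ ∑ j, y' (.inr (i, j)) * (-(A j L)) :=
          Finset.sum_nonneg fun j _ => ht2 i j
        have s3 : 0 ≤ ∑ j, y' (.inr (j, i)) * A j L :=
          Finset.sum_nonneg fun j _ => ht3 i j
        have := hy0 (.inl i); simp only [hydef]; linarith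
      have key : ∀ v : ι → ℚ, (∑ i, y i * v i) =
          (∑ i, y' (.inl i) * v i) +
            ∑ i, ∑ j, y' (.inr (i, j)) * ((-(A j L)) * v i + A i L * v j) := by
        intro v
        have e1 : (∑ i, y i * v i) = (∑ i, y' (.inl i) * v i)
            + (∑ i, ∑ j, y' (.inr (i, j)) * (-(A j L)) * v i)
            + (∑ i, ∑ j, y' (.inr (j, i)) * A j L * v i) := by
          rw [← Finset.sum_add_distrib, ← Finset.sum_add_distrib]
          refine Finset.sum_congr rfl fun i _ => ?_
          simp only [hydef, add_mul, Finset.sum_mul]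
        rw [e1, Finset.sum_comm (f := fun i j => y' (.inr (j, i)) * A j L * v i)]
        rw [add_assoc, ← Finset.sum_add_distrib]
        congr 1
        refine Finset.sum_congr rfl fun i _ => ?_
        rw [← Finset.sum_add_distrib]
        refine Finset.sum_congr rfl fun j _ => ?_
        ring
      refine ⟨y, hy0', ?_, ?_, ?_⟩
      · -- y ≠ 0
        obtain ⟨p, hp⟩ := Function.ne_iff.mp hyne
        have hpp : 0 < y' p := lt_of_le_of_ne (hy0 p) (Ne.symm hp)
        have : ∃ i, 0 < y i := by
          match p with
          | .inl i =>
            refine ⟨i, ?_⟩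
            have s2 : 0 ≤ ∑ j, y' (.inr (i, j)) * (-(A j L)) :=
              Finset.sum_nonneg fun j _ => ht2 i j
            have s3 : 0 ≤ ∑ j, y' (.inr (j, i)) * A j L :=
              Finset.sum_nonneg fun j _ => ht3 i j
            simp only [hydef]; linarith
          | .inr (i, j) =>
            refine ⟨i, ?_⟩
            have hactp : act' (.inr (i, j)) := by
              by_contra hcon; rw [hyvan (.inr (i, j)) hcon] at hpp; exact lt_irrefl _ hpp
            have hterm : 0 < y' (.inr (i, j)) * (-(A j L)) :=
              mul_pos hpp (by have := hactp.2.2.2; linarith)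
            have s2 : y' (.inr (i, j)) * (-(A j L)) ≤
                ∑ j', y' (.inr (i, j')) * (-(A j' L)) :=
              Finset.single_le_sum (fun j' _ => ht2 i j') (Finset.mem_univ j)
            have s3 : 0 ≤ ∑ j', y' (.inr (j', i)) * A j' L :=
              Finset.sum_nonneg fun j' _ => ht3 i j'
            have := hy0 (.inl i)
            simp only [hydef]; linarith
        obtain ⟨i, hi⟩ := this
        intro h0; rw [h0] at hi; exact lt_irrefl _ hi
      · -- vanishing
        intro i hi
        have v1 : y' (.inl i) = 0 := hyvan (.inl i) (fun h => hi h.1)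
        have v2 : ∀ j, y' (.inr (i, j)) * (-(A j L)) = 0 := by
          intro j
          rw [hyvan (.inr (i, j)) (fun h => hi h.1), zero_mul]
        have v3 : ∀ j, y' (.inr (j, i)) * A j L = 0 := by
          intro j
          rw [hyvan (.inr (j, i)) (fun h => hi h.2.1), zero_mul]
        simp only [hydef, v1, Finset.sum_congr rfl (fun j _ => v2 j),
          Finset.sum_congr rfl (fun j _ => v3 j), Finset.sum_const_zero, add_zero, zero_add]
      · -- sums
        intro q
        induction q using Fin.lastCases with
        | last =>
          rw [key (fun i => A i L)]
          have pairzero : ∀ i j : ι,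
              y' (.inr (i, j)) * ((-(A j L)) * A i L + A i L * A j L) = 0 := by
            intro i j; ring_nf
          have inlle : ∀ i, y' (.inl i) * A i L ≤ 0 := by
            intro i
            by_cases hp : act' (.inl i)
            · exact mul_nonpos_of_nonneg_of_nonpos (hy0 _) hp.2
            · rw [hyvan (.inl i) hp, zero_mul]
          have : (∑ i, ∑ j, y' (.inr (i, j)) * ((-(A j L)) * A i L + A i L * A j L)) = 0 := by
            refine Finset.sum_eq_zero fun i _ => Finset.sum_eq_zero fun j _ => pairzero i j
          rw [this, add_zero]
          exact Finset.sum_nonpos fun i _ => inlle i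
        | cast q =>
          rw [key (fun i => A i q.castSucc)]
          have := hysum q
          rw [Fintype.sum_sum_type, Fintype.sum_prod_type] at this
          exact this
    obtain ⟨w', hw'0, hw'⟩ := IH A' act' c' hc' hy'
    set S : ι → ℚ := fun i => ∑ q : Fin n, A i q.castSucc * w' q with hS
    have hSinl : ∀ i, (∑ q : Fin n, A' (.inl i) q * w' q) = S i := by
      intro i; rfl
    have hSinr : ∀ i j, (∑ q : Fin n, A' (.inr (i, j)) q * w' q)
        = (-(A j L)) * S i + A i L * S j := by
      intro i j
      simp only [hS, Finset.mul_sum]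
      rw [← Finset.sum_add_distrib]
      refine Finset.sum_congr rfl fun q _ => ?_
      show ((-(A j L)) * A i q.castSucc + A i L * A j q.castSucc) * w' q = _
      ring
    set cand : Finset ℚ := insert 0 ((Finset.univ.filter (fun i => act i ∧ 0 < A i L)).image
      (fun i => (c i - S i) / A i L)) with hcand
    have hcne : cand.Nonempty := ⟨0, Finset.mem_insert_self _ _⟩
    set wlast : ℚ := cand.max' hcne with hwlast
    have hwlast0 : 0 ≤ wlast := Finset.le_max' _ _ (Finset.mem_insert_self _ _)
    refine ⟨Fin.snoc w' wlast, ?_, ?_⟩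
    · intro q
      rcases Fin.eq_castSucc_or_eq_last q with ⟨i, rfl⟩ | rfl
      · rw [Fin.snoc_castSucc]; exact hw'0 i
      · rw [Fin.snoc_last]; exact hwlast0
    · intro i hai
      have hsplit : (∑ q : Fin (n+1), A i q * (Fin.snoc w' wlast : Fin (n+1) → ℚ) q) = S i + A i L * wlast := by
        rw [Fin.sum_univ_castSucc]
        simp only [Fin.snoc_castSucc, Fin.snoc_last]
        rfl
      rw [hsplit]
      rcases le_or_gt (A i L) 0 with hneg | hpos
      · -- A i L ≤ 0 : use inl constraint and (if < 0) the upper bound on wlast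
        have hinl : c i ≤ S i := by
          have := hw' (.inl i) ⟨hai, hneg⟩
          rwa [hSinl] at this
        rcases eq_or_lt_of_le hneg with heq | hlt
        · rw [heq]; simpa using hinl
        · -- strict: wlast ≤ (S i - c i)/(-(A i L))
          have hUpos : (0:ℚ) < -(A i L) := by linarith
          have hub : wlast ≤ (S i - c i) / (-(A i L)) := by
            apply Finset.max'_le
            intro x hx
            rcases Finset.mem_insert.mp hx with h0 | hx
            · rw [h0]; exact div_nonneg (by linarith) (le_of_lt hUpos)
            · obtain ⟨u, hu, rfl⟩ := Finset.mem_image.mp hx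
              obtain ⟨hau, hupos⟩ := Finset.mem_filter.mp hu |>.2
              have hpair := hw' (.inr (u, i)) ⟨hau, hai, hupos, hlt⟩
              rw [hSinr] at hpair
              have : (-(A i L)) * c u + A u L * c i ≤ (-(A i L)) * S u + A u L * S i := hpair
              rw [div_le_div_iff₀ hupos hUpos]
              nlinarith
          have : A i L * wlast ≥ A i L * ((S i - c i) / (-(A i L))) :=
            mul_le_mul_of_nonpos_left hub (le_of_lt hlt)
          have heval : A i L * ((S i - c i) / (-(A i L))) = c i - S i := by
            rw [mul_div_assoc', div_eq_iff hUpos.ne']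
            ring
          linarith [heval ▸ this]
      · -- 0 < A i L : wlast is at least the needed ratio
        have hmem : (c i - S i) / A i L ∈ cand := by
          refine Finset.mem_insert_of_mem (Finset.mem_image.mpr ⟨i, ?_, rfl⟩)
          exact Finset.mem_filter.mpr ⟨Finset.mem_univ i, hai, hpos⟩
        have hge : (c i - S i) / A i L ≤ wlast := Finset.le_max' _ _ hmem
        have : A i L * ((c i - S i) / A i L) ≤ A i L * wlast :=
          mul_le_mul_of_nonneg_left hge (le_of_lt hpos)
        have heval : A i L * ((c i - S i) / A i L) = c i - S i := by
          field_simp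
        linarith [heval ▸ this]


theorem small_int_solution {n : ℕ} {ι : Type} [Fintype ι] (M : ℕ) (hM1 : 1 ≤ M)
    (A : ι → Fin n → ℤ) (hM : ∀ i q, (A i q).natAbs ≤ M)
    (w0 : Fin n → ℚ) (hw0 : ∀ q, 0 ≤ w0 q) (hw : ∀ i, 1 ≤ ∑ q, (A i q : ℚ) * w0 q) :
    ∃ v : Fin n → ℕ, (∀ i, 1 ≤ ∑ q, A i q * (v q : ℤ)) ∧
      ∀ q, v q ≤ n.factorial * M ^ n := by
  rcases Nat.eq_zero_or_pos n with rfl | hn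
  · refine ⟨fun _ => 0, fun i => ?_, fun q => q.elim0⟩
    have := hw i
    norm_num at this
  -- setup
  set B : (ι ⊕ Fin n) → Fin n → ℤ := Sum.elim A (fun p q => if p = q then 1 else 0) with hB
  set γ : (ι ⊕ Fin n) → ℤ := Sum.elim (fun _ => 1) (fun _ => 0) with hγ
  set Bq : (ι ⊕ Fin n) → Fin n → ℚ := fun j q => (B j q : ℚ) with hBq
  set dot : (ι ⊕ Fin n) → (Fin n → ℚ) → ℚ := fun j w => ∑ q, Bq j q * w q with hdot
  set Sat : (Fin n → ℚ) → Prop := fun w => ∀ j, (γ j : ℚ) ≤ dot j w with hSatdef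
  have hBbound : ∀ j q, |B j q| ≤ (M : ℤ) := by
    rintro (i | p) q
    · have := hM i q
      simp only [hB, Sum.elim_inl]
      rw [Int.abs_eq_natAbs]
      exact_mod_cast this
    · simp only [hB, Sum.elim_inr]
      split
      · have h1 : (1:ℤ) ≤ (M:ℤ) := by exact_mod_cast hM1
        simpa using h1
      · simp
  have hSat0 : Sat w0 := by
    rintro (i | p)
    · simpa [hγ, hdot, hBq, hB] using hw i
    · simp only [hγ, hdot, hBq, hB, Sum.elim_inr]
      push_cast
      rw [Finset.sum_eq_single p]
      · simp [hw0 p]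
      · intro q _ hq; simp [Ne.symm hq]
      · intro h; exact absurd (Finset.mem_univ p) h
  have hdotinr : ∀ (q₀ : Fin n) (dd : Fin n → ℚ), dot (Sum.inr q₀) dd = dd q₀ := by
    intro q₀ dd
    simp only [hdot, hBq, hB, Sum.elim_inr]
    push_cast
    rw [Finset.sum_eq_single q₀]
    · simp
    · intro q _ hq; simp [Ne.symm hq]
    · intro h; exact absurd (Finset.mem_univ q₀) h
  -- vertex lemma
  have vertex : ∀ (k : ℕ) (w : Fin n → ℚ), Sat w →
      (Finset.univ.filter (fun j => dot j w ≠ (γ j : ℚ))).card ≤ k →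
      ∃ w₂, Sat w₂ ∧
        Submodule.span ℚ (Bq '' {j | dot j w₂ = (γ j : ℚ)}) = ⊤ := by
    intro k
    induction k with
    | zero =>
      intro w hSatw hcard
      refine ⟨w, hSatw, ?_⟩
      have hall : ∀ j, dot j w = (γ j : ℚ) := by
        intro j
        by_contra hne
        have hmem : j ∈ Finset.univ.filter (fun j => dot j w ≠ (γ j : ℚ)) := by
          simp [hne]
        have := Finset.card_pos.mpr ⟨j, hmem⟩
        omega
      rw [eq_top_iff]
      intro x _
      have hx : (∑ p, x p • Bq (Sum.inr p)) = x := by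
        funext q
        rw [Finset.sum_apply]
        rw [Finset.sum_eq_single q]
        · simp [hBq, hB]
        · intro p _ hp
          simp only [Pi.smul_apply, hBq, hB, Sum.elim_inr]
          simp [hp]
        · intro h; exact absurd (Finset.mem_univ q) h
      rw [← hx]
      refine Submodule.sum_mem _ fun p _ => Submodule.smul_mem _ _ ?_
      exact Submodule.subset_span ⟨Sum.inr p, hall _, rfl⟩
    | succ k IH =>
      intro w hSatw hcard
      by_cases hspan : Submodule.span ℚ (Bq '' {j | dot j w = (γ j : ℚ)}) = ⊤
      · exact ⟨w, hSatw, hspan⟩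
      · obtain ⟨x, hx⟩ : ∃ x, x ∉ Submodule.span ℚ (Bq '' {j | dot j w = (γ j : ℚ)}) := by
          by_contra hcon
          push_neg at hcon
          exact hspan (Submodule.eq_top_iff'.mpr hcon)
        obtain ⟨f, hfx, hfmap⟩ := Submodule.exists_dual_map_eq_bot_of_notMem hx inferInstance
        set d : Fin n → ℚ := fun q => f (fun q' => if q = q' then 1 else 0) with hd
        have hfd : ∀ v : Fin n → ℚ, f v = ∑ q, v q * d q := by
          intro v
          conv_lhs => rw [pi_eq_sum_univ v]
          rw [map_sum]
          refine Finset.sum_congr rfl fun q _ => ?_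
          rw [LinearMap.map_smul]
          rfl
        have horthf : ∀ j, dot j w = (γ j : ℚ) → (∑ q, Bq j q * d q) = 0 := by
          intro j hj
          have hmem : Bq j ∈ Submodule.span ℚ (Bq '' {j | dot j w = (γ j : ℚ)}) :=
            Submodule.subset_span ⟨j, hj, rfl⟩
          have hmm : f (Bq j) ∈ Submodule.map f
              (Submodule.span ℚ (Bq '' {j | dot j w = (γ j:ℚ)})) :=
            Submodule.mem_map_of_mem hmem
          rw [hfmap] at hmm
          rw [← hfd]
          exact (Submodule.mem_bot _).mp hmm
        have hdne : ∃ q₀, d q₀ ≠ 0 := by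
          by_contra hcon
          push_neg at hcon
          apply hfx
          rw [hfd]
          simp [hcon]
        -- main construction given a direction with a strictly negative row value
        have main : ∀ dd : Fin n → ℚ, (∀ j, dot j w = (γ j : ℚ) → dot j dd = 0) →
            (∃ j, dot j dd < 0) →
            ∃ w₂, Sat w₂ ∧
              Submodule.span ℚ (Bq '' {j | dot j w₂ = (γ j : ℚ)}) = ⊤ := by
          rintro dd horth ⟨jneg, hjneg⟩
          set N : Finset (ι ⊕ Fin n) := Finset.univ.filter (fun j => dot j dd < 0) with hN
          have hNne : N.Nonempty := ⟨jneg, by simp [hN, hjneg]⟩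
          have hNim : (N.image (fun j => (dot j w - (γ j : ℚ)) / (-(dot j dd)))).Nonempty :=
            hNne.image _
          set m := (N.image (fun j => (dot j w - (γ j : ℚ)) / (-(dot j dd)))).min' hNim with hm
          obtain ⟨j₀, hj₀N, hgj₀⟩ := Finset.mem_image.mp
            ((N.image (fun j => (dot j w - (γ j : ℚ)) / (-(dot j dd)))).min'_mem hNim)
          rw [← hm] at hgj₀
          have hj₀neg : dot j₀ dd < 0 := (Finset.mem_filter.mp hj₀N).2
          have hj₀nt : dot j₀ w ≠ (γ j₀ : ℚ) := by
            intro heq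
            rw [horth j₀ heq] at hj₀neg
            exact lt_irrefl _ hj₀neg
          have hslack : 0 < dot j₀ w - (γ j₀ : ℚ) := by
            have := hSatw j₀
            rcases lt_or_eq_of_le this with h | h
            · linarith
            · exact absurd h.symm hj₀nt
          have hmpos : 0 < m := by
            rw [← hgj₀]
            exact div_pos hslack (by linarith)
          have hmle : ∀ j ∈ N, m ≤ (dot j w - (γ j : ℚ)) / (-(dot j dd)) := fun j hj =>
            Finset.min'_le _ _ (Finset.mem_image_of_mem _ hj)
          set w₂ : Fin n → ℚ := fun q => w q + m * dd q with hw₂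
          have hdotw₂ : ∀ j, dot j w₂ = dot j w + m * dot j dd := by
            intro j
            simp only [hdot, hw₂, mul_add, Finset.sum_add_distrib, Finset.mul_sum]
            congr 1
            refine Finset.sum_congr rfl fun q _ => ?_
            ring
          have hSat₂ : Sat w₂ := by
            intro j
            rw [hdotw₂]
            rcases le_or_gt 0 (dot j dd) with hpos | hneg
            · have := hSatw j
              nlinarith
            · have hjN : j ∈ N := by simp [hN, hneg]
              have hle := hmle j hjN
              rw [le_div_iff₀ (by linarith : (0:ℚ) < -(dot j dd))] at hle
              nlinarith
          have htight₂ : ∀ j, dot j w = (γ j : ℚ) → dot j w₂ = (γ j : ℚ) := by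
            intro j hj
            rw [hdotw₂, horth j hj, mul_zero, add_zero]
            exact hj
          have hj₀tight : dot j₀ w₂ = (γ j₀ : ℚ) := by
            rw [hdotw₂]
            have hmmul : m * dot j₀ dd = -(dot j₀ w - (γ j₀ : ℚ)) := by
              rw [← hgj₀]
              field_simp [ne_of_lt hj₀neg]
            rw [hmmul]; ring
          have hsub : (Finset.univ.filter (fun j => dot j w₂ ≠ (γ j : ℚ))) ⊂
              (Finset.univ.filter (fun j => dot j w ≠ (γ j : ℚ))) := by
            constructor
            · intro j hj
              rw [Finset.mem_filter] at hj ⊢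
              refine ⟨hj.1, fun hc => hj.2 (htight₂ j hc)⟩
            · intro hcon
              have hj₀mem : j₀ ∈ Finset.univ.filter (fun j => dot j w ≠ (γ j : ℚ)) := by
                simp [hj₀nt]
              have hmem2 := hcon hj₀mem
              rw [Finset.mem_filter] at hmem2
              exact hmem2.2 hj₀tight
          have hlt := Finset.card_lt_card hsub
          exact IH w₂ hSat₂ (by omega)
        obtain ⟨q₀, hq₀⟩ := hdne
        rcases lt_or_gt_of_ne hq₀ with hlt | hgt
        · exact main d (fun j hj => by rw [hdot]; exact horthf j hj)
            ⟨Sum.inr q₀, by rw [hdotinr]; exact hlt⟩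
        · refine main (fun q => -(d q)) (fun j hj => ?_)
            ⟨Sum.inr q₀, by rw [hdotinr]; linarith⟩
          have : dot j (fun q => -(d q)) = -(∑ q, Bq j q * d q) := by
            simp only [hdot, ← Finset.sum_neg_distrib]
            refine Finset.sum_congr rfl fun q _ => ?_
            ring
          rw [this, horthf j hj, neg_zero]
  obtain ⟨ws, hSatws, hspan⟩ := vertex _ w0 hSat0 le_rfl
  -- extract a basis from the tight rows
  obtain ⟨bs, hbss, hbspan, hbli⟩ := exists_linearIndependent ℚ (Bq '' {j | dot j ws = (γ j : ℚ)})
  have hbtop : ⊤ ≤ Submodule.span ℚ (Set.range ((↑) : bs → (Fin n → ℚ))) := by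
    rw [Subtype.range_coe, hbspan, hspan]
  set bas : Module.Basis bs ℚ (Fin n → ℚ) := Module.Basis.mk hbli hbtop with hbas
  have : Fintype bs := (hbli.setFinite).fintype
  set e : bs ≃ Fin n := bas.indexEquiv (Pi.basisFun ℚ (Fin n)) with he
  have hsel : ∀ p : Fin n, ∃ j, dot j ws = (γ j : ℚ) ∧ Bq j = ((e.symm p : bs) : Fin n → ℚ) := by
    intro p
    have := hbss (e.symm p).2
    obtain ⟨j, hj, hjeq⟩ := this
    exact ⟨j, hj, hjeq⟩
  set jfun : Fin n → (ι ⊕ Fin n) := fun p => Classical.choose (hsel p) with hjfun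
  have hjtight : ∀ p, dot (jfun p) ws = (γ (jfun p) : ℚ) := fun p => (Classical.choose_spec (hsel p)).1
  have hjrow : ∀ p, Bq (jfun p) = ((e.symm p : bs) : Fin n → ℚ) := fun p =>
    (Classical.choose_spec (hsel p)).2
  set Bz : Matrix (Fin n) (Fin n) ℤ := Matrix.of (fun p q => B (jfun p) q) with hBz
  set BQ : Matrix (Fin n) (Fin n) ℚ := Bz.map (Int.cast) with hBQmat
  have hBQrow : ∀ p, (fun q => BQ p q) = ((e.symm p : bs) : Fin n → ℚ) := by
    intro p
    funext q
    have := congrFun (hjrow p) q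
    simpa [hBQmat, hBz, hBq] using this
  -- invertibility
  have hinv : IsUnit BQ.det := by
    have hmat : (Pi.basisFun ℚ (Fin n)).toMatrix (⇑(bas.reindex e)) = BQ.transpose := by
      ext q p
      rw [Module.Basis.toMatrix_apply, Pi.basisFun_repr, Module.Basis.reindex_apply, Matrix.transpose_apply]
      rw [hbas, Module.Basis.mk_apply]
      exact (congrFun (hBQrow p) q).symm
    have hinv' := (Pi.basisFun ℚ (Fin n)).invertibleToMatrix (bas.reindex e)
    rw [hmat] at hinv'
    letI := hinv'
    have h1 : IsUnit BQ.transpose.det := Matrix.isUnit_det_of_invertible _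
    rwa [Matrix.det_transpose] at h1
  have hdetQ : BQ.det ≠ 0 := hinv.ne_zero
  have castdet : ∀ (m : Matrix (Fin n) (Fin n) ℤ), ((m.det : ℤ) : ℚ) = (m.map (Int.cast : ℤ → ℚ)).det := by
    intro m
    have h := RingHom.map_det (Int.castRingHom ℚ) m
    simpa using h
  have hdetcast : ((Bz.det : ℤ) : ℚ) = BQ.det := by
    rw [castdet]
  have hdetZ : Bz.det ≠ 0 := by
    intro h
    apply hdetQ
    rw [← hdetcast, h, Int.cast_zero]
  -- tight linear system
  have hBws : BQ.mulVec ws = fun p => (γ (jfun p) : ℚ) := by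
    funext p
    have := hjtight p
    rw [← this]
    simp only [Matrix.mulVec, dotProduct, hdot]
    rfl
  set u : Fin n → ℤ := Bz.cramer (fun p => γ (jfun p)) with hu
  have hucast : ∀ q, ((u q : ℤ) : ℚ) = BQ.cramer (fun p => (γ (jfun p) : ℚ)) q := by
    intro q
    rw [hu, Matrix.cramer_apply, Matrix.cramer_apply]
    rw [castdet, Matrix.map_updateCol]
    rfl
  have hkey : ∀ q, BQ.det * ws q = (u q : ℚ) := by
    have h1 : BQ.mulVec (fun q => (u q : ℚ)) = BQ.det • (fun p => (γ (jfun p) : ℚ)) := by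
      have : (fun q => (u q : ℚ)) = BQ.cramer (fun p => (γ (jfun p) : ℚ)) := by
        funext q; exact hucast q
      rw [this, Matrix.mulVec_cramer]
    have h2 : BQ.mulVec (fun q => BQ.det * ws q) = BQ.det • (fun p => (γ (jfun p) : ℚ)) := by
      have : (fun q => BQ.det * ws q) = BQ.det • ws := rfl
      rw [this, Matrix.mulVec_smul, hBws]
    have h3 : (fun q => BQ.det * ws q) = (fun q => (u q : ℚ)) := by
      have hcancel := congrArg (fun v => (BQ⁻¹).mulVec v) (h2.trans h1.symm)
      simpa [Matrix.mulVec_mulVec, Matrix.nonsing_inv_mul BQ hinv, Matrix.one_mulVec] using hcancel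
    intro q
    exact congrFun h3 q
  -- integer nonnegative solution
  set vZ : Fin n → ℤ := fun q => if 0 ≤ Bz.det then u q else -(u q) with hvZ
  have hvZcast : ∀ q, ((vZ q : ℤ) : ℚ) = |BQ.det| * ws q := by
    intro q
    rcases le_or_gt 0 Bz.det with hD | hD
    · have habs : |BQ.det| = BQ.det := by
        rw [abs_of_nonneg]
        rw [← hdetcast]
        exact_mod_cast hD
      rw [habs, hkey q]
      simp [hvZ, hD]
    · have habs : |BQ.det| = -BQ.det := by
        rw [abs_of_neg]
        rw [← hdetcast]
        exact_mod_cast hD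
      rw [habs]
      have : vZ q = -(u q) := by simp [hvZ, not_le.mpr hD]
      rw [this]
      push_cast
      rw [← hkey q]
      ring
  have habspos : (1 : ℚ) ≤ |BQ.det| := by
    have h1 : (1 : ℤ) ≤ |Bz.det| := Int.one_le_abs (by exact_mod_cast hdetZ)
    have : ((|Bz.det| : ℤ) : ℚ) = |BQ.det| := by
      rw [← hdetcast]
      push_cast
      rfl
    rw [← this]
    exact_mod_cast h1
  have hvZ0 : ∀ q, 0 ≤ vZ q := by
    intro q
    have : (0:ℚ) ≤ ((vZ q : ℤ) : ℚ) := by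
      rw [hvZcast q]
      have hwsq : 0 ≤ ws q := by
        have h := hSatws (Sum.inr q)
        rw [hdotinr] at h
        simpa [hγ] using h
      exact mul_nonneg (abs_nonneg _) hwsq
    exact_mod_cast this
  -- the integer solution satisfies the constraints with margin |det| ≥ 1
  have hcons : ∀ i : ι, (1:ℤ) ≤ ∑ q, A i q * vZ q := by
    intro i
    have hQ : (1:ℚ) ≤ ∑ q, (A i q : ℚ) * ((vZ q : ℤ) : ℚ) := by
      have hws : (1:ℚ) ≤ ∑ q, (A i q : ℚ) * ws q := by
        have h := hSatws (Sum.inl i)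
        simpa [hdot, hBq, hB, hγ] using h
      have : (∑ q, (A i q : ℚ) * ((vZ q : ℤ) : ℚ)) = |BQ.det| * ∑ q, (A i q : ℚ) * ws q := by
        rw [Finset.mul_sum]
        refine Finset.sum_congr rfl fun q _ => ?_
        rw [hvZcast q]
        ring
      rw [this]
      calc (1:ℚ) ≤ |BQ.det| * 1 := by linarith
        _ ≤ |BQ.det| * ∑ q, (A i q : ℚ) * ws q := by
            apply mul_le_mul_of_nonneg_left hws (abs_nonneg _)
    exact_mod_cast hQ
  -- bound via Hadamard-type factorial bound on determinants
  have hbound : ∀ q, vZ q ≤ ((n.factorial * M ^ n : ℕ) : ℤ) := by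
    intro q
    have hub : |u q| ≤ ((n.factorial * M ^ n : ℕ) : ℤ) := by
      have hentries : ∀ p p', |(Bz.updateCol q (fun p => γ (jfun p))) p p'| ≤ (M:ℤ) := by
        intro p p'
        rw [Matrix.updateCol_apply]
        split
        · rcases (jfun p) with i | r <;> simp [hγ] <;> omega
        · exact hBbound (jfun p) p'
      have hdetle := Matrix.det_le (A := Bz.updateCol q (fun p => γ (jfun p)))
        (abv := AbsoluteValue.abs) (x := (M:ℤ)) (fun p p' => hentries p p')
      have : |u q| = |(Bz.updateCol q (fun p => γ (jfun p))).det| := by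
        rw [hu, Matrix.cramer_apply]
      rw [this]
      calc |(Bz.updateCol q (fun p => γ (jfun p))).det|
          ≤ (Fintype.card (Fin n)).factorial • ((M:ℤ)) ^ (Fintype.card (Fin n)) := hdetle
        _ = ((n.factorial * M ^ n : ℕ) : ℤ) := by
            simp only [Fintype.card_fin, nsmul_eq_mul]
            push_cast
            ring
    calc vZ q ≤ |vZ q| := le_abs_self _
      _ = |u q| := by
          rcases le_or_gt 0 Bz.det with hD | hD
          · simp [hvZ, hD]
          · simp [hvZ, not_le.mpr hD]
      _ ≤ _ := hub
  refine ⟨fun q => (vZ q).toNat, fun i => ?_, fun q => ?_⟩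
  · have : ∀ q, ((vZ q).toNat : ℤ) = vZ q := fun q => Int.toNat_of_nonneg (hvZ0 q)
    calc (1:ℤ) ≤ ∑ q, A i q * vZ q := hcons i
      _ = ∑ q, A i q * ((vZ q).toNat : ℤ) := by
          refine Finset.sum_congr rfl fun q _ => ?_
          rw [this q]
  · exact Int.toNat_le.mpr (hbound q)


/-- Lemma 6.2: boundedness is equivalent to existence of a small potential function. -/
lemma bound_arith (M nQ : ℕ) (hM : 2 ≤ M) (hn : nQ ≤ M) :
    (M - 1) * (nQ.factorial * M ^ nQ) ≤ 2 ^ (100 * M * Nat.log 2 M) := by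
  have hL : 1 ≤ Nat.log 2 M := by
    have h2 : Nat.log 2 2 = 1 := by rw [Nat.log_eq_one_iff]; omega
    calc 1 = Nat.log 2 2 := h2.symm
      _ ≤ Nat.log 2 M := Nat.log_mono_right hM
  set L := Nat.log 2 M with hLdef
  have hMle : M ≤ 2 ^ (L + 1) := le_of_lt (Nat.lt_pow_succ_log_self (by omega) M)
  have hf : nQ.factorial ≤ M ^ M :=
    le_trans (Nat.factorial_le_pow nQ)
      (le_trans (Nat.pow_le_pow_left hn nQ) (Nat.pow_le_pow_right (by omega) hn))
  have hp : M ^ nQ ≤ M ^ M := Nat.pow_le_pow_right (by omega) hn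
  calc (M - 1) * (nQ.factorial * M ^ nQ) ≤ M * (M ^ M * M ^ M) :=
      Nat.mul_le_mul (by omega) (Nat.mul_le_mul hf hp)
    _ = M ^ (2 * M + 1) := by
        rw [← pow_add]
        rw [← pow_succ']
        congr 1
        ring
    _ ≤ (2 ^ (L + 1)) ^ (2 * M + 1) := Nat.pow_le_pow_left hMle _
    _ = 2 ^ ((L + 1) * (2 * M + 1)) := by rw [← pow_mul]
    _ ≤ 2 ^ (100 * M * L) := by
        apply Nat.pow_le_pow_right (by omega)
        calc (L + 1) * (2 * M + 1) ≤ (2 * L) * (3 * M) :=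
            Nat.mul_le_mul (by omega) (by omega)
          _ = 6 * (M * L) := by ring
          _ ≤ 100 * (M * L) := Nat.mul_le_mul_right _ (by omega)
          _ = 100 * M * L := by ring

theorem stmt8 :
    ∃ c : ℕ, 0 < c ∧
      ∀ (σ : Type) [DecidableEq σ] (P : PopComputer σ),
        2 ≤ csize P →
        (∀ q ∈ P.Q, ∃ C, ReachableConfig P C ∧ q ∈ C) →
        (Bounded P ↔ ∃ w : σ → ℕ, IsPotential P w ∧
          ∀ q ∈ P.Q, w q ≤ 2 ^ (c * csize P * Nat.log 2 (csize P))) := by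
  refine ⟨100, by norm_num, ?_⟩
  intro σ inst P hm hcov
  constructor
  case mpr =>
    rintro ⟨w, hpot, _⟩
    exact bounded_of_potential P w hpot
  intro hb
  set M := csize P with hMdef
  set nQ := P.Q.card with hnQdef
  have hQcard : Fintype.card {x // x ∈ P.Q} = nQ := Fintype.card_coe P.Q
  set eQ : {x // x ∈ P.Q} ≃ Fin nQ := Fintype.equivFinOfCardEq hQcard with heQ
  set AZ : {t // t ∈ P.δ} → Fin nQ → ℤ := fun t q =>
    ((t : Multiset σ × Multiset σ).1.count ((eQ.symm q : {x // x ∈ P.Q}) : σ) : ℤ)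
      - ((t : Multiset σ × Multiset σ).2.count ((eQ.symm q : {x // x ∈ P.Q}) : σ) : ℤ) with hAZ
  have hsum_le : (∑ u ∈ P.δ, Multiset.card u.1) ≤ M := by
    rw [hMdef]
    show _ ≤ P.Q.card + Multiset.card P.H + outSize P + ∑ u ∈ P.δ, Multiset.card u.1
    exact Nat.le_add_left _ _
  have hcard1 : ∀ t : {t // t ∈ P.δ}, Multiset.card (t : Multiset σ × Multiset σ).1 ≤ M := by
    intro t
    exact le_trans (Finset.single_le_sum (f := fun u => Multiset.card u.1) (fun u _ => Nat.zero_le _) t.2) hsum_le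
  have hnQle : nQ ≤ M := by
    rw [hMdef, hnQdef]
    show _ ≤ P.Q.card + Multiset.card P.H + outSize P + ∑ u ∈ P.δ, Multiset.card u.1
    omega
  have hMabs : ∀ (t : {t // t ∈ P.δ}) (q : Fin nQ), (AZ t q).natAbs ≤ M := by
    intro t q
    have h1 := Multiset.count_le_card ((eQ.symm q : {x // x ∈ P.Q}) : σ)
      (t : Multiset σ × Multiset σ).1
    have h2 := Multiset.count_le_card ((eQ.symm q : {x // x ∈ P.Q}) : σ)
      (t : Multiset σ × Multiset σ).2
    have h3 := (P.delta_card t.1 t.2).1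
    have h4 := hcard1 t
    simp only [hAZ]
    omega
  -- apply the theorem of the alternative
  have hvhyp : ¬ ∃ y : {t // t ∈ P.δ} → ℚ, (∀ i, 0 ≤ y i) ∧ y ≠ 0 ∧
      (∀ i : {t // t ∈ P.δ}, ¬ True → y i = 0) ∧
      ∀ q : Fin nQ, (∑ i : {t // t ∈ P.δ}, y i * ((AZ i q : ℤ) : ℚ)) ≤ 0 := by
    rintro ⟨yq, hy0, hyne, _, hsum⟩
    apply bounded_no_y P hb hcov
    set N : ℕ := ∏ t : {t // t ∈ P.δ}, (yq t).den with hN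
    have hNpos : 0 < N := Finset.prod_pos (fun t _ => (yq t).den_pos)
    set yN : {t // t ∈ P.δ} → ℕ := fun t => (yq t).num.toNat * (N / (yq t).den) with hyN
    have hcastyN : ∀ t, ((yN t : ℕ) : ℚ) = yq t * N := by
      intro t
      have hdvd : (yq t).den ∣ N := Finset.dvd_prod_of_mem _ (Finset.mem_univ t)
      have hden0 : ((yq t).den : ℚ) ≠ 0 := by
        have := (yq t).den_pos
        positivity
      have hnum : (((yq t).num.toNat : ℤ) : ℚ) = ((yq t).num : ℚ) := by
        rw [Int.toNat_of_nonneg (Rat.num_nonneg.mpr (hy0 t))]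
      simp only [hyN]
      push_cast
      rw [Nat.cast_div hdvd hden0]
      have hnum2 : (((yq t).num.toNat : ℕ) : ℚ) = ((yq t).num : ℚ) := by
        exact_mod_cast congrArg (fun z : ℤ => (z : ℚ))
          (Int.toNat_of_nonneg (Rat.num_nonneg.mpr (hy0 t)))
      rw [hnum2]
      conv_rhs => rw [← Rat.num_div_den (yq t)]
      rw [div_mul_eq_mul_div, ← mul_div_assoc]
    refine ⟨yN, ?_, ?_⟩
    · obtain ⟨t0, ht0⟩ := Function.ne_iff.mp hyne
      have hpos : 0 < yq t0 := lt_of_le_of_ne (hy0 t0) (fun h => ht0 (by simpa using h.symm))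
      have : (0:ℚ) < (yN t0 : ℚ) := by
        rw [hcastyN t0]
        positivity
      have hne0 : yN t0 ≠ 0 := by
        intro h
        rw [h] at this
        norm_num at this
      exact Function.ne_iff.mpr ⟨t0, by simpa using hne0⟩
    · rw [Multiset.le_iff_count]
      intro a
      rw [Multiset.count_sum', Multiset.count_sum']
      simp only [Multiset.count_nsmul]
      by_cases ha : a ∈ P.Q
      · have hq := hsum (eQ ⟨a, ha⟩)
        have hAZa : ∀ t : {t // t ∈ P.δ}, ((AZ t (eQ ⟨a, ha⟩) : ℤ) : ℚ)
            = ((t : Multiset σ × Multiset σ).1.count a : ℚ)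
              - ((t : Multiset σ × Multiset σ).2.count a : ℚ) := by
          intro t
          simp only [hAZ, Equiv.symm_apply_apply]
          push_cast
          ring
        rw [Finset.sum_congr rfl (fun t _ => by rw [hAZa t])] at hq
        have hQle : (∑ t : {t // t ∈ P.δ}, (yN t : ℚ) *
            (((t : Multiset σ × Multiset σ).1.count a : ℚ)
              - ((t : Multiset σ × Multiset σ).2.count a : ℚ))) ≤ 0 := by
          have heq : (∑ t : {t // t ∈ P.δ}, (yN t : ℚ) *
              (((t : Multiset σ × Multiset σ).1.count a : ℚ)
                - ((t : Multiset σ × Multiset σ).2.count a : ℚ)))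
              = (N : ℚ) * ∑ t : {t // t ∈ P.δ}, yq t *
              (((t : Multiset σ × Multiset σ).1.count a : ℚ)
                - ((t : Multiset σ × Multiset σ).2.count a : ℚ)) := by
            rw [Finset.mul_sum]
            refine Finset.sum_congr rfl fun t _ => ?_
            rw [hcastyN t]
            ring
          rw [heq]
          have hN0 : (0:ℚ) ≤ (N : ℚ) := by positivity
          exact mul_nonpos_of_nonneg_of_nonpos hN0 hq
        have hcastle : ((∑ t : {t // t ∈ P.δ}, yN t * (t : Multiset σ × Multiset σ).1.count a : ℕ) : ℚ)
            ≤ ((∑ t : {t // t ∈ P.δ}, yN t * (t : Multiset σ × Multiset σ).2.count a : ℕ) : ℚ) := by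
          push_cast
          have hexp : (∑ t : {t // t ∈ P.δ}, (yN t : ℚ) *
              (((t : Multiset σ × Multiset σ).1.count a : ℚ)
                - ((t : Multiset σ × Multiset σ).2.count a : ℚ)))
              = (∑ t : {t // t ∈ P.δ}, (yN t : ℚ) * ((t : Multiset σ × Multiset σ).1.count a : ℚ))
              - (∑ t : {t // t ∈ P.δ}, (yN t : ℚ) * ((t : Multiset σ × Multiset σ).2.count a : ℚ)) := by
            rw [← Finset.sum_sub_distrib]
            refine Finset.sum_congr rfl fun t _ => ?_
            ring
          rw [hexp] at hQle
          linarith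
        exact_mod_cast hcastle
      · have hz1 : ∀ t : {t // t ∈ P.δ}, (t : Multiset σ × Multiset σ).1.count a = 0 := by
          intro t
          rw [Multiset.count_eq_zero]
          intro hmem
          exact ha (P.delta_mem t.1 t.2 a (Multiset.mem_add.mpr (Or.inl hmem)))
        have hz2 : ∀ t : {t // t ∈ P.δ}, (t : Multiset σ × Multiset σ).2.count a = 0 := by
          intro t
          rw [Multiset.count_eq_zero]
          intro hmem
          exact ha (P.delta_mem t.1 t.2 a (Multiset.mem_add.mpr (Or.inr hmem)))
        simp [hz1, hz2]
  obtain ⟨w', hw'0, hw'⟩ := ville nQ (ι := {t // t ∈ P.δ})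
      (fun t q => ((AZ t q : ℤ) : ℚ)) (fun _ => True) (fun _ => 1)
      (fun _ _ => one_pos) hvhyp
  -- small integer solution
  obtain ⟨v, hv, hvb⟩ := small_int_solution M (by omega) AZ hMabs w' hw'0 (fun t => hw' t trivial)
  -- build the potential
  refine ⟨fun x => if h : x ∈ P.Q then (M - 1) * v (eQ ⟨x, h⟩) else 0, ?_, ?_⟩
  · -- IsPotential
    intro t ht
    set ts : {t // t ∈ P.δ} := ⟨t, ht⟩ with hts
    have key : ∀ (D : Multiset σ), (∀ x ∈ D, x ∈ P.Q) →
        mweight (fun x => if h : x ∈ P.Q then (M - 1) * v (eQ ⟨x, h⟩) else 0) D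
          = (M - 1) * ∑ q : Fin nQ, D.count ((eQ.symm q : {x // x ∈ P.Q}) : σ) * v q := by
      intro D hD
      rw [mweight_eq_sum_count _ D P.Q hD]
      rw [← Finset.sum_coe_sort P.Q
        (fun x => D.count x * (if h : x ∈ P.Q then (M - 1) * v (eQ ⟨x, h⟩) else 0))]
      rw [← Equiv.sum_comp eQ.symm (fun s : {x // x ∈ P.Q} =>
        D.count (s : σ) * (if h : (s:σ) ∈ P.Q then (M - 1) * v (eQ ⟨(s:σ), h⟩) else 0))]
      rw [Finset.mul_sum]
      refine Finset.sum_congr rfl fun q _ => ?_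
      have hmem := (eQ.symm q).2
      rw [dif_pos hmem]
      have hsub : (⟨((eQ.symm q : {x // x ∈ P.Q}) : σ), hmem⟩ : {x // x ∈ P.Q}) = eQ.symm q :=
        Subtype.ext rfl
      rw [hsub, Equiv.apply_symm_apply]
      ring
    have hmem1 : ∀ x ∈ t.1, x ∈ P.Q := fun x hx =>
      P.delta_mem t ht x (Multiset.mem_add.mpr (Or.inl hx))
    have hmem2 : ∀ x ∈ t.2, x ∈ P.Q := fun x hx =>
      P.delta_mem t ht x (Multiset.mem_add.mpr (Or.inr hx))
    rw [key t.1 hmem1, key t.2 hmem2]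
    have hvts := hv ts
    have hsplit : (∑ q, AZ ts q * (v q : ℤ))
        = ((∑ q : Fin nQ, t.1.count ((eQ.symm q : {x // x ∈ P.Q}) : σ) * v q : ℕ) : ℤ)
          - ((∑ q : Fin nQ, t.2.count ((eQ.symm q : {x // x ∈ P.Q}) : σ) * v q : ℕ) : ℤ) := by
      push_cast
      rw [← Finset.sum_sub_distrib]
      refine Finset.sum_congr rfl fun q _ => ?_
      simp only [hAZ]
      push_cast
      ring
    rw [hsplit] at hvts
    set a := ∑ q : Fin nQ, t.1.count ((eQ.symm q : {x // x ∈ P.Q}) : σ) * v q with hadef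
    set b := ∑ q : Fin nQ, t.2.count ((eQ.symm q : {x // x ∈ P.Q}) : σ) * v q with hbdef
    have hba : b + 1 ≤ a := by omega
    have hcardle : Multiset.card t.1 ≤ M := hcard1 ts
    calc (M - 1) * b + (Multiset.card t.1 - 1) ≤ (M - 1) * b + (M - 1) := by omega
      _ = (M - 1) * (b + 1) := by ring
      _ ≤ (M - 1) * a := Nat.mul_le_mul_left _ hba
  · -- bound
    intro x hx
    show (if h : x ∈ P.Q then (M - 1) * v (eQ ⟨x, h⟩) else 0) ≤ 2 ^ (100 * M * Nat.log 2 M)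
    rw [dif_pos hx]
    calc (M - 1) * v (eQ ⟨x, hx⟩) ≤ (M - 1) * (nQ.factorial * M ^ nQ) :=
        Nat.mul_le_mul_left _ (hvb _)
      _ ≤ 2 ^ (100 * M * Nat.log 2 M) := bound_arith M nQ hm hnQle

end PaperPP
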